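/- Let q be a real quaternion which is not a real scalar (i.e., q is not in the image of the algebra map ℝ → ℍ), and let A(q) denote the ℝ-linear span of {1, q} in ℍ. Then for every ℝ-subspace X of ℍ of dimension 2, the following are equivalent: (i) q·x ∈ X for every x ∈ X (X is invariant under left multiplication by q); (ii) there exists a nonzero quaternion t such that X = A(q)·t, the image of A(q) under right multiplication by t. -/

import Mathlib

theorem stmt_6 (q : Quaternion ℝ)
    (hq : q ∉ Set.range (algebraMap ℝ (Quaternion ℝ)))
    (X : Submodule ℝ (Quaternion ℝ)) (hX : Module.finrank ℝ X = 2) :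
    (∀ x ∈ X, q * x ∈ X) ↔
      ∃ t : Quaternion ℝ, t ≠ 0 ∧
        X = (Submodule.span ℝ ({1, q} : Set (Quaternion ℝ))).map
              (LinearMap.mulRight ℝ t) := by
  have hq2 : q * q = (2*q.re) • q - (Quaternion.normSq q : ℝ) • 1 := by
    ext <;> simp [Quaternion.normSq_def', Quaternion.re_one, Quaternion.imI_one, Quaternion.imJ_one, Quaternion.imK_one] <;> ring
  have hmap : ∀ t : Quaternion ℝ,
      (Submodule.span ℝ ({1, q} : Set (Quaternion ℝ))).map (LinearMap.mulRight ℝ t)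
        = Submodule.span ℝ {t, q * t} := by
    intro t
    rw [Submodule.map_span]
    congr 1
    simp [Set.image_insert_eq]
  constructor
  · intro hinv
    -- pick nonzero t in X
    have hne : X ≠ ⊥ := by
      intro h
      rw [h] at hX
      simp at hX
    obtain ⟨t, ht, ht0⟩ := Submodule.exists_mem_ne_zero_of_ne_bot hne
    refine ⟨t, ht0, ?_⟩
    rw [hmap]
    have hle : Submodule.span ℝ {t, q * t} ≤ X := by
      rw [Submodule.span_le]
      rintro x (rfl | rfl)
      · exact ht
      · exact hinv t ht
    have hli : LinearIndependent ℝ ![t, q * t] := by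
      rw [LinearIndependent.pair_iff]
      intro a b hab
      have : (algebraMap ℝ (Quaternion ℝ) a + b • q) * t = 0 := by
        rw [add_mul, smul_mul_assoc, Algebra.algebraMap_eq_smul_one, smul_mul_assoc,
          one_mul]
        exact hab
      have h0 : algebraMap ℝ (Quaternion ℝ) a + b • q = 0 := by
        rcases mul_eq_zero.mp this with h | h
        · exact h
        · exact absurd h ht0
      have hb : b = 0 := by
        by_contra hb
        apply hq
        refine ⟨-a / b, ?_⟩
        have hbq : b • q = (-a) • (1 : Quaternion ℝ) := by
          rw [Algebra.algebraMap_eq_smul_one] at h0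
          rw [neg_smul]
          exact eq_neg_of_add_eq_zero_right h0
        rw [Algebra.algebraMap_eq_smul_one]
        have h1 : (-a / b) • (1 : Quaternion ℝ) = b⁻¹ • ((-a) • (1 : Quaternion ℝ)) := by
          rw [smul_smul]; ring_nf
        rw [h1, ← hbq, smul_smul, inv_mul_cancel₀ hb, one_smul]
      constructor
      · have := h0
        rw [hb, zero_smul, add_zero] at this
        exact (map_eq_zero _).mp this
      · exact hb
    have hrank : Module.finrank ℝ (Submodule.span ℝ ({t, q*t} : Set (Quaternion ℝ))) = 2 := by
      have := finrank_span_eq_card (R := ℝ) hli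
      rwa [Matrix.range_cons_cons_empty] at this
    exact (Submodule.eq_of_le_of_finrank_le hle (by rw [hX, hrank])).symm
  · rintro ⟨t, ht0, rfl⟩
    rw [hmap]
    intro x hx
    obtain ⟨a, b, rfl⟩ := Submodule.mem_span_pair.mp hx
    have : q * (a • t + b • (q * t)) = a • (q * t) + b • ((q*q) * t) := by
      rw [mul_add, mul_smul_comm, mul_smul_comm, ← mul_assoc]
    rw [this, hq2]
    apply Submodule.add_mem
    · exact Submodule.smul_mem _ _ (Submodule.subset_span (by simp))
    · apply Submodule.smul_mem
      rw [sub_mul, smul_mul_assoc, smul_mul_assoc, one_mul]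
      exact Submodule.sub_mem _ (Submodule.smul_mem _ _ (Submodule.subset_span (by simp)))
        (Submodule.smul_mem _ _ (Submodule.subset_span (by simp)))
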